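/- For the contraction of T_n by the flat F_k^{II} = {e_*} ∪ {a_1, b_1, ..., a_k, b_k}: the contraction T_n / F_k^{II} is a direct sum of n − k rank-one matroids (each a parallel pair {a_i, b_i} for i > k), and hence its lattice of flats is a Boolean lattice of rank n − k. -/

import Mathlib

inductive TnEdge (n : ℕ) : Type
  | spine : TnEdge n
  | a (i : Fin n) : TnEdge n
  | b (i : Fin n) : TnEdge n
  deriving DecidableEq, Fintype

open TnEdge

def TnIndep (n : ℕ) (S : Set (TnEdge n)) : Prop :=
  (∀ i : Fin n, ¬ ({spine, a i, b i} : Set (TnEdge n)) ⊆ S) ∧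
  (∀ i j : Fin n, i ≠ j → ¬ ({a i, b i, a j, b j} : Set (TnEdge n)) ⊆ S)

/-- The rank of a set in a matroid: the largest size of an independent subset. -/
noncomputable def mRank {α : Type*} (M : Matroid α) (S : Set α) : ℕ :=
  sSup (Set.ncard '' {I | I ⊆ S ∧ M.Indep I})

/-- The representative flat `F_k^{II} = {e_*} ∪ {a_1, b_1, …, a_k, b_k}`. -/
def FkII (n k : ℕ) : Set (TnEdge n) :=
  {spine} ∪ {e | ∃ i : Fin n, (i : ℕ) < k ∧ (e = a i ∨ e = b i)}

/-- The rank function of the contraction `M / C`: `A ↦ r(A ∪ C) − r(C)`. -/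
noncomputable def cRank {α : Type*} (M : Matroid α) (C : Set α) (A : Set α) : ℕ :=
  mRank M (A ∪ C) - mRank M C

/-- Independence in the contraction `M / C`. -/
def cIndep {α : Type*} (M : Matroid α) (C : Set α) (I : Set α) : Prop :=
  I ⊆ M.E \ C ∧ mRank M (I ∪ C) = I.ncard + mRank M C

/-- The flats of the contraction `M / C`, viewed inside the ground set of `M / C`. -/
def cFlat {α : Type*} (M : Matroid α) (C : Set α) (G : Set α) : Prop :=
  Disjoint G C ∧ M.IsFlat (G ∪ C)

section Aux
variable {n k : ℕ}

lemma tnIndep_iff {S : Set (TnEdge n)} : TnIndep n S ↔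
    (∀ i : Fin n, ¬ (spine ∈ S ∧ a i ∈ S ∧ b i ∈ S)) ∧
    (∀ i j : Fin n, i ≠ j → ¬ (a i ∈ S ∧ b i ∈ S ∧ a j ∈ S ∧ b j ∈ S)) := by
  simp [TnIndep, Set.insert_subset_iff]

@[simp] lemma spine_mem_FkII : spine ∈ FkII n k := Or.inl rfl

@[simp] lemma a_mem_FkII {i : Fin n} : a i ∈ FkII n k ↔ (i : ℕ) < k := by
  simp only [FkII, Set.mem_union, Set.mem_singleton_iff, Set.mem_setOf_eq]
  constructor
  · rintro (h | ⟨j, hj, h | h⟩) <;> first | (cases h; exact hj) | cases h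
  · intro h; exact Or.inr ⟨i, h, Or.inl rfl⟩

@[simp] lemma b_mem_FkII {i : Fin n} : b i ∈ FkII n k ↔ (i : ℕ) < k := by
  simp only [FkII, Set.mem_union, Set.mem_singleton_iff, Set.mem_setOf_eq]
  constructor
  · rintro (h | ⟨j, hj, h | h⟩) <;> first | (cases h; exact hj) | cases h
  · intro h; exact Or.inr ⟨i, h, Or.inr rfl⟩

/-- set of touched indices -/
def tset {n : ℕ} (S : Set (TnEdge n)) : Set (Fin n) := {i | a i ∈ S ∨ b i ∈ S}

lemma tset_mono {S T : Set (TnEdge n)} (h : S ⊆ T) : tset S ⊆ tset T := by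
  rintro i (hi | hi)
  · exact Or.inl (h hi)
  · exact Or.inr (h hi)

lemma tset_union (S T : Set (TnEdge n)) : tset (S ∪ T) = tset S ∪ tset T := by
  ext i
  simp only [tset, Set.mem_setOf_eq, Set.mem_union]
  tauto

lemma tset_FkII : tset (FkII n k) = {i : Fin n | (i : ℕ) < k} := by
  ext i; simp [tset]

lemma lowset_card (hk : k ≤ n) : {j : Fin n | (j : ℕ) < k}.ncard = k := by
  have h1 : {j : Fin n | (j : ℕ) < k} = (Fin.castLE hk) '' Set.univ := by
    ext j
    simp only [Set.mem_setOf_eq, Set.image_univ, Set.mem_range]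
    constructor
    · intro h; exact ⟨⟨(j : ℕ), h⟩, by ext; simp⟩
    · rintro ⟨m, rfl⟩; exact m.2
  rw [h1, Set.ncard_image_of_injOn ((Fin.castLE_injective hk).injOn), Set.ncard_univ,
    Nat.card_eq_fintype_card, Fintype.card_fin]

lemma tset_card_le {I : Set (TnEdge n)} : (tset I).ncard ≤ I.ncard := by
  classical
  refine Set.ncard_le_ncard_of_injOn (fun i => if a i ∈ I then a i else b i) ?_ ?_ (Set.toFinite _)
  · rintro i (hi | hi)
    · simp [hi]
    · by_cases h : a i ∈ I <;> simp [h, hi]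
  · intro x hx y hy hxy
    dsimp only at hxy
    split_ifs at hxy <;> first | (injection hxy with h; exact h) | (injection hxy)

lemma tset_card_add_one_le {I : Set (TnEdge n)} {i0 : Fin n}
    (ha : a i0 ∈ I) (hb : b i0 ∈ I) : (tset I).ncard + 1 ≤ I.ncard := by
  classical
  have hmaps : ∀ i ∈ tset I, (if a i ∈ I then a i else b i) ∈ I \ {b i0} := by
    rintro i (hi | hi)
    · simp [hi]
    · by_cases h : a i ∈ I
      · simp [h]
      · simp only [if_neg h, Set.mem_diff, Set.mem_singleton_iff]
        refine ⟨hi, ?_⟩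
        intro hcon
        rw [b.injEq] at hcon
        exact h (hcon ▸ ha)
  have hinj : Set.InjOn (fun i => if a i ∈ I then a i else b i) (tset I) := by
    intro x hx y hy hxy
    dsimp only at hxy
    split_ifs at hxy <;> first | (injection hxy with h; exact h) | (injection hxy)
  have h1 := Set.ncard_le_ncard_of_injOn _ hmaps hinj (Set.toFinite _)
  have h2 : (I \ {b i0}).ncard = I.ncard - 1 := Set.ncard_diff_singleton_of_mem hb
  have h3 : 0 < I.ncard := (Set.ncard_pos (Set.toFinite I)).mpr ⟨_, hb⟩
  omega


lemma indep_card_le {J : Set (TnEdge n)} (hJ : TnIndep n J) :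
    J.ncard ≤ (tset J).ncard + 1 := by
  classical
  rw [tnIndep_iff] at hJ
  obtain ⟨h1, h2⟩ := hJ
  set p : Option (Fin n) := if h : ∃ i, a i ∈ J ∧ b i ∈ J then some h.choose else none with hp
  have hpspec : ∀ i : Fin n, p = some i → a i ∈ J ∧ b i ∈ J := by
    intro i hi
    rw [hp] at hi
    split_ifs at hi with h
    rw [Option.some_inj] at hi
    exact hi ▸ h.choose_spec
  have hpfull : ∀ i : Fin n, a i ∈ J → b i ∈ J → p = some i := by
    intro i hai hbi
    have hex : ∃ i, a i ∈ J ∧ b i ∈ J := ⟨i, hai, hbi⟩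
    rw [hp, dif_pos hex]
    obtain ⟨ha', hb'⟩ := hex.choose_spec
    by_cases hc : hex.choose = i
    · rw [hc]
    · exact absurd ⟨ha', hb', hai, hbi⟩ (h2 _ _ hc)
  set f : TnEdge n → Option (Fin n) := fun e => match e with
    | spine => none
    | a i => some i
    | b i => if some i = p then none else some i with hf
  have hmaps : ∀ e ∈ J, f e ∈ insert none (some '' tset J) := by
    intro e he
    cases e with
    | spine => exact Set.mem_insert _ _
    | a i => exact Set.mem_insert_of_mem _ ⟨i, Or.inl he, rfl⟩
    | b i =>
        by_cases hc : some i = p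
        · simp only [hf, if_pos hc]; exact Set.mem_insert _ _
        · simp only [hf, if_neg hc]; exact Set.mem_insert_of_mem _ ⟨i, Or.inr he, rfl⟩
  have hinj : Set.InjOn f J := by
    intro x hx y hy hxy
    cases x with
    | spine =>
        cases y with
        | spine => rfl
        | a j => simp [hf] at hxy
        | b j =>
            simp only [hf] at hxy
            split_ifs at hxy with hc
            · obtain ⟨haj, hbj⟩ := hpspec j hc.symm
              exact absurd ⟨hx, haj, hy⟩ (h1 j)
    | a i =>
        cases y with
        | spine => simp [hf] at hxy
        | a j => simp only [hf, Option.some_inj] at hxy; rw [hxy]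
        | b j =>
            simp only [hf] at hxy
            split_ifs at hxy with hc
            · rw [Option.some_inj] at hxy
              subst hxy
              exact absurd (hpfull i hx hy) (fun h => hc h.symm)
    | b i =>
        cases y with
        | spine =>
            simp only [hf] at hxy
            split_ifs at hxy with hc
            · obtain ⟨hai, hbi⟩ := hpspec i hc.symm
              exact absurd ⟨hy, hai, hx⟩ (h1 i)
        | a j =>
            simp only [hf] at hxy
            split_ifs at hxy with hc
            · rw [Option.some_inj] at hxy
              subst hxy
              exact absurd (hpfull i hy hx) (fun h => hc h.symm)
        | b j =>
            simp only [hf] at hxy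
            rcases eq_or_ne i j with rfl | hne
            · rfl
            · exfalso
              split_ifs at hxy with hc hd
              all_goals try exact hne (Option.some_inj.mp (hc.trans hd.symm))
              all_goals try exact hne (Option.some_inj.mp hxy)
              all_goals try exact hne rfl
              all_goals try cases hxy
              done
  calc J.ncard ≤ (insert none (some '' tset J)).ncard :=
        Set.ncard_le_ncard_of_injOn f hmaps hinj (Set.toFinite _)
    _ ≤ (some '' tset J).ncard + 1 := Set.ncard_insert_le _ _
    _ = (tset J).ncard + 1 := by
        rw [Set.ncard_image_of_injOn ((Option.some_injective _).injOn)]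

lemma mRank_eq_of {α : Type*} {M : Matroid α} {S : Set α} {r : ℕ} (J : Set α)
    (hJS : J ⊆ S) (hJ : M.Indep J) (hc : J.ncard = r)
    (hub : ∀ I, I ⊆ S → M.Indep I → I.ncard ≤ r) : mRank M S = r := by
  apply le_antisymm
  · refine csSup_le ⟨0, ∅, ⟨Set.empty_subset _, M.empty_indep⟩, by simp⟩ ?_
    rintro x ⟨I, ⟨h1', h2'⟩, rfl⟩
    exact hub I h1' h2'
  · refine le_csSup ⟨r, ?_⟩ ⟨J, ⟨hJS, hJ⟩, hc⟩
    rintro x ⟨I, ⟨h1', h2'⟩, rfl⟩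
    exact hub I h1' h2'

lemma mRank_le_of {α : Type*} {M : Matroid α} {S : Set α} {r : ℕ}
    (hub : ∀ I, I ⊆ S → M.Indep I → I.ncard ≤ r) : mRank M S ≤ r := by
  refine csSup_le ⟨0, ∅, ⟨Set.empty_subset _, M.empty_indep⟩, by simp⟩ ?_
  rintro x ⟨I, ⟨h1', h2'⟩, rfl⟩
  exact hub I h1' h2'


def highSet (n k : ℕ) : Set (TnEdge n) :=
  {e | ∃ i : Fin n, k ≤ (i : ℕ) ∧ (e = a i ∨ e = b i)}

lemma B0_subset : insert spine (TnEdge.a '' {j : Fin n | (j : ℕ) < k}) ⊆ FkII n k := by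
  rintro e (rfl | ⟨j, hj, rfl⟩)
  · exact spine_mem_FkII
  · exact a_mem_FkII.mpr hj

lemma B0_ncard (hk : k ≤ n) :
    (insert spine (TnEdge.a '' {j : Fin n | (j : ℕ) < k})).ncard = k + 1 := by
  rw [Set.ncard_insert_of_notMem (by simp) (Set.toFinite _),
    Set.ncard_image_of_injOn (fun x _ y _ h => by injection h), lowset_card hk]

lemma high_mem_a {I : Set (TnEdge n)} (hI : I ⊆ highSet n k) {i : Fin n} (h : a i ∈ I) :
    k ≤ (i : ℕ) := by
  rcases hI h with ⟨j, hj, hh | hh⟩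
  · injection hh with hh; exact hh ▸ hj
  · cases hh

lemma high_mem_b {I : Set (TnEdge n)} (hI : I ⊆ highSet n k) {i : Fin n} (h : b i ∈ I) :
    k ≤ (i : ℕ) := by
  rcases hI h with ⟨j, hj, hh | hh⟩
  · cases hh
  · injection hh with hh; exact hh ▸ hj

lemma high_not_spine {I : Set (TnEdge n)} (hI : I ⊆ highSet n k) : spine ∉ I := by
  intro h
  rcases hI h with ⟨j, _, hh | hh⟩ <;> cases hh

lemma rank_union_ub {M : Matroid (TnEdge n)} (hk : k ≤ n)
    (hInd : ∀ S, M.Indep S ↔ TnIndep n S) {I : Set (TnEdge n)} :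
    mRank M (I ∪ FkII n k) ≤ (tset I).ncard + k + 1 := by
  apply mRank_le_of
  intro J hJS hJi
  have h1 := indep_card_le ((hInd J).mp hJi)
  have h2 : tset J ⊆ tset I ∪ {i : Fin n | (i : ℕ) < k} := by
    rw [← tset_FkII (k := k), ← tset_union]
    exact tset_mono hJS
  have h3 := Set.ncard_le_ncard h2 (Set.toFinite _)
  have h4 := Set.ncard_union_le (tset I) {i : Fin n | (i : ℕ) < k}
  rw [lowset_card hk] at h4
  omega

lemma rank_union_eq {M : Matroid (TnEdge n)} (hk : k ≤ n)
    (hInd : ∀ S, M.Indep S ↔ TnIndep n S) {I : Set (TnEdge n)}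
    (hI : I ⊆ highSet n k) (hnp : ∀ i : Fin n, ¬ (a i ∈ I ∧ b i ∈ I)) :
    mRank M (I ∪ FkII n k) = I.ncard + (k + 1) := by
  classical
  set B0 := insert spine (TnEdge.a '' {j : Fin n | (j : ℕ) < k}) with hB0
  have haB0 : ∀ i : Fin n, a i ∈ B0 → (i : ℕ) < k := by
    intro i h
    rcases h with h | ⟨j, hj, hh⟩
    · cases h
    · injection hh with hh; exact hh ▸ hj
  have hbB0 : ∀ i : Fin n, b i ∉ B0 := by intro i h; simp [hB0] at h
  apply mRank_eq_of (B0 ∪ I)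
  · exact Set.union_subset (B0_subset.trans Set.subset_union_right) Set.subset_union_left
  · rw [hInd, tnIndep_iff]
    constructor
    · rintro i ⟨hsp, hai, hbi⟩
      have hbI : b i ∈ I := hbi.resolve_left (hbB0 i)
      rcases hai with hai | hai
      · exact absurd (high_mem_b hI hbI) (Nat.not_le.mpr (haB0 i hai))
      · exact hnp i ⟨hai, hbI⟩
    · rintro i j hij ⟨hai, hbi, haj, hbj⟩
      have hbI : b i ∈ I := hbi.resolve_left (hbB0 i)
      rcases hai with hai | hai
      · exact absurd (high_mem_b hI hbI) (Nat.not_le.mpr (haB0 i hai))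
      · exact hnp i ⟨hai, hbI⟩
  · have hdisj : Disjoint B0 I := by
      rw [Set.disjoint_left]
      rintro e (rfl | ⟨j, hj, rfl⟩) heI
      · exact high_not_spine hI heI
      · exact absurd (high_mem_a hI heI) (Nat.not_le.mpr hj)
    rw [Set.ncard_union_eq hdisj (Set.toFinite _) (Set.toFinite _), B0_ncard hk, Nat.add_comm]
  · intro J hJS hJi
    have h1 := indep_card_le ((hInd J).mp hJi)
    have h2 : tset J ⊆ tset I ∪ {i : Fin n | (i : ℕ) < k} := by
      rw [← tset_FkII (k := k), ← tset_union]
      exact tset_mono hJS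
    have h3 := Set.ncard_le_ncard h2 (Set.toFinite _)
    have h4 := Set.ncard_union_le (tset I) {i : Fin n | (i : ℕ) < k}
    rw [lowset_card hk] at h4
    have h5 := tset_card_le (I := I)
    omega

lemma rank_union_le_pair {M : Matroid (TnEdge n)} (hk : k ≤ n)
    (hInd : ∀ S, M.Indep S ↔ TnIndep n S) {I : Set (TnEdge n)} {i0 : Fin n}
    (ha : a i0 ∈ I) (hb : b i0 ∈ I) :
    mRank M (I ∪ FkII n k) ≤ I.ncard + k := by
  have h1 := rank_union_ub (M := M) hk hInd (I := I)
  have h2 := tset_card_add_one_le ha hb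
  omega


lemma flat_of_closed {M : Matroid (TnEdge n)} (hE : M.E = Set.univ)
    (hInd : ∀ S, M.Indep S ↔ TnIndep n S) {F : Set (TnEdge n)}
    (hspine : spine ∈ F) (hpair : ∀ i : Fin n, (a i ∈ F ↔ b i ∈ F)) : M.IsFlat F := by
  refine ⟨?_, by rw [hE]; exact Set.subset_univ _⟩
  intro I X hIF hIX e heX
  by_cases heI : e ∈ I
  · exact hIF.subset heI
  have hni : ¬ M.Indep (insert e I) := (hIX.insert_dep ⟨heX, heI⟩).not_indep
  rw [hInd, tnIndep_iff] at hni
  have hIi := (hInd I).mp hIF.indep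
  rw [tnIndep_iff] at hIi
  obtain ⟨hI1, hI2⟩ := hIi
  cases e with
  | spine => exact hspine
  | a j =>
      have hbj : b j ∈ I := by
        by_contra hbj
        apply hni
        constructor
        · rintro i ⟨hsp, hai, hbi⟩
          have hsp' : spine ∈ I := by rcases hsp with h | h <;> first | exact h | cases h
          have hbi' : b i ∈ I := by rcases hbi with h | h <;> first | exact h | cases h
          rcases hai with h | h
          · injection h with h; exact hbj (h ▸ hbi')
          · exact hI1 i ⟨hsp', h, hbi'⟩
        · rintro i i' hii' ⟨hai, hbi, hai', hbi'⟩
          have hbi2 : b i ∈ I := by rcases hbi with h | h <;> first | exact h | cases h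
          have hbi2' : b i' ∈ I := by rcases hbi' with h | h <;> first | exact h | cases h
          rcases hai with h | h
          · injection h with h; exact hbj (h ▸ hbi2)
          · rcases hai' with h' | h'
            · injection h' with h'; exact hbj (h' ▸ hbi2')
            · exact hI2 i i' hii' ⟨h, hbi2, h', hbi2'⟩
      exact (hpair j).mpr (hIF.subset hbj)
  | b j =>
      have haj : a j ∈ I := by
        by_contra haj
        apply hni
        constructor
        · rintro i ⟨hsp, hai, hbi⟩
          have hsp' : spine ∈ I := by rcases hsp with h | h <;> first | exact h | cases h
          have hai' : a i ∈ I := by rcases hai with h | h <;> first | exact h | cases h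
          rcases hbi with h | h
          · injection h with h; exact haj (h ▸ hai')
          · exact hI1 i ⟨hsp', hai', h⟩
        · rintro i i' hii' ⟨hai, hbi, hai', hbi'⟩
          have hai2 : a i ∈ I := by rcases hai with h | h <;> first | exact h | cases h
          have hai2' : a i' ∈ I := by rcases hai' with h | h <;> first | exact h | cases h
          rcases hbi with h | h
          · injection h with h; exact haj (h ▸ hai2)
          · rcases hbi' with h' | h'
            · injection h' with h'; exact haj (h' ▸ hai2')
            · exact hI2 i i' hii' ⟨hai2, h, hai2', h'⟩
      exact (hpair j).mp (hIF.subset haj)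

lemma flat_a_to_b {M : Matroid (TnEdge n)} (hE : M.E = Set.univ)
    (hInd : ∀ S, M.Indep S ↔ TnIndep n S) {F : Set (TnEdge n)}
    (hF : M.IsFlat F) (hsp : spine ∈ F) {i : Fin n} (hai : a i ∈ F) : b i ∈ F := by
  classical
  set pick : Fin n → TnEdge n := fun j => if a j ∈ F then a j else b j with hpick
  set I : Set (TnEdge n) :=
    insert spine {e | ∃ j : Fin n, (a j ∈ F ∨ b j ∈ F) ∧ e = pick j} with hI
  have hpa : ∀ m : Fin n, a m ∈ I ↔ a m ∈ F := by
    intro m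
    constructor
    · rintro (h | ⟨j, hj, h⟩)
      · cases h
      · rw [hpick] at h; dsimp only at h; split_ifs at h with hc
        all_goals try exact hc
        all_goals try (injection h with h; exact h ▸ hc)
        all_goals cases h
    · intro h
      exact Or.inr ⟨m, Or.inl h, by rw [hpick]; simp [h]⟩
  have hpb : ∀ m : Fin n, b m ∈ I ↔ (b m ∈ F ∧ a m ∉ F) := by
    intro m
    constructor
    · rintro (h | ⟨j, hj, h⟩)
      · cases h
      · rw [hpick] at h; dsimp only at h; split_ifs at h with hc
        all_goals try (injection h with h; subst h)
        all_goals try cases h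
        all_goals exact ⟨hj.resolve_left hc, hc⟩
    · rintro ⟨h1, h2⟩
      exact Or.inr ⟨m, Or.inr h1, by rw [hpick]; simp [h2]⟩
  have hspI : spine ∈ I := Or.inl rfl
  have hIF : I ⊆ F := by
    intro e he
    cases e with
    | spine => exact hsp
    | a m => exact (hpa m).mp he
    | b m => exact ((hpb m).mp he).1
  have hIind : M.Indep I := by
    rw [hInd, tnIndep_iff]
    constructor
    · rintro m ⟨-, h1, h2⟩
      exact ((hpb m).mp h2).2 ((hpa m).mp h1)
    · rintro m m' _ ⟨h1, h2, -, -⟩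
      exact ((hpb m).mp h2).2 ((hpa m).mp h1)
  have hdep : ∀ m : Fin n, a m ∈ F → ¬ M.Indep (insert (b m) I) := by
    intro m h2 hcon
    rw [hInd, tnIndep_iff] at hcon
    exact hcon.1 m ⟨Or.inr hspI, Or.inr ((hpa m).mpr h2), Or.inl rfl⟩
  have hBF : M.IsBasis I F := by
    apply hIind.isBasis_of_forall_insert hIF
    rintro e ⟨heF, heI⟩
    refine Matroid.dep_iff.mpr ⟨?_, by rw [hE]; exact Set.subset_univ _⟩
    cases e with
    | spine => exact absurd hspI heI
    | a m => exact absurd ((hpa m).mpr heF) heI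
    | b m =>
        have ham : a m ∈ F := by
          by_contra ham
          exact heI ((hpb m).mpr ⟨heF, ham⟩)
        exact hdep m ham
  have hBX : M.IsBasis I (insert (b i) F) := by
    apply hIind.isBasis_of_forall_insert (hIF.trans (Set.subset_insert _ _))
    rintro e ⟨heX, heI⟩
    refine Matroid.dep_iff.mpr ⟨?_, by rw [hE]; exact Set.subset_univ _⟩
    rcases heX with rfl | heF
    · exact hdep i hai
    cases e with
    | spine => exact absurd hspI heI
    | a m => exact absurd ((hpa m).mpr heF) heI
    | b m =>
        have ham : a m ∈ F := by
          by_contra ham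
          exact heI ((hpb m).mpr ⟨heF, ham⟩)
        exact hdep m ham
  exact hF.subset_of_isBasis_of_isBasis hBF hBX (Set.mem_insert _ _)

lemma flat_b_to_a {M : Matroid (TnEdge n)} (hE : M.E = Set.univ)
    (hInd : ∀ S, M.Indep S ↔ TnIndep n S) {F : Set (TnEdge n)}
    (hF : M.IsFlat F) (hsp : spine ∈ F) {i : Fin n} (hbi : b i ∈ F) : a i ∈ F := by
  classical
  set pick : Fin n → TnEdge n := fun j => if b j ∈ F then b j else a j with hpick
  set I : Set (TnEdge n) :=
    insert spine {e | ∃ j : Fin n, (a j ∈ F ∨ b j ∈ F) ∧ e = pick j} with hI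
  have hpb : ∀ m : Fin n, b m ∈ I ↔ b m ∈ F := by
    intro m
    constructor
    · rintro (h | ⟨j, hj, h⟩)
      · cases h
      · rw [hpick] at h; dsimp only at h; split_ifs at h with hc
        all_goals try exact hc
        all_goals try (injection h with h; exact h ▸ hc)
        all_goals cases h
    · intro h
      exact Or.inr ⟨m, Or.inr h, by rw [hpick]; simp [h]⟩
  have hpa : ∀ m : Fin n, a m ∈ I ↔ (a m ∈ F ∧ b m ∉ F) := by
    intro m
    constructor
    · rintro (h | ⟨j, hj, h⟩)
      · cases h
      · rw [hpick] at h; dsimp only at h; split_ifs at h with hc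
        all_goals try (injection h with h; subst h)
        all_goals try cases h
        all_goals exact ⟨hj.resolve_right hc, hc⟩
    · rintro ⟨h1, h2⟩
      exact Or.inr ⟨m, Or.inl h1, by rw [hpick]; simp [h2]⟩
  have hspI : spine ∈ I := Or.inl rfl
  have hIF : I ⊆ F := by
    intro e he
    cases e with
    | spine => exact hsp
    | a m => exact ((hpa m).mp he).1
    | b m => exact (hpb m).mp he
  have hIind : M.Indep I := by
    rw [hInd, tnIndep_iff]
    constructor
    · rintro m ⟨-, h1, h2⟩
      exact ((hpa m).mp h1).2 ((hpb m).mp h2)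
    · rintro m m' _ ⟨h1, h2, -, -⟩
      exact ((hpa m).mp h1).2 ((hpb m).mp h2)
  have hdep : ∀ m : Fin n, b m ∈ F → ¬ M.Indep (insert (a m) I) := by
    intro m h2 hcon
    rw [hInd, tnIndep_iff] at hcon
    exact hcon.1 m ⟨Or.inr hspI, Or.inl rfl, Or.inr ((hpb m).mpr h2)⟩
  have hBF : M.IsBasis I F := by
    apply hIind.isBasis_of_forall_insert hIF
    rintro e ⟨heF, heI⟩
    refine Matroid.dep_iff.mpr ⟨?_, by rw [hE]; exact Set.subset_univ _⟩
    cases e with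
    | spine => exact absurd hspI heI
    | b m => exact absurd ((hpb m).mpr heF) heI
    | a m =>
        have hbm : b m ∈ F := by
          by_contra hbm
          exact heI ((hpa m).mpr ⟨heF, hbm⟩)
        exact hdep m hbm
  have hBX : M.IsBasis I (insert (a i) F) := by
    apply hIind.isBasis_of_forall_insert (hIF.trans (Set.subset_insert _ _))
    rintro e ⟨heX, heI⟩
    refine Matroid.dep_iff.mpr ⟨?_, by rw [hE]; exact Set.subset_univ _⟩
    rcases heX with rfl | heF
    · exact hdep i hbi
    cases e with
    | spine => exact absurd hspI heI
    | b m => exact absurd ((hpb m).mpr heF) heI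
    | a m =>
        have hbm : b m ∈ F := by
          by_contra hbm
          exact heI ((hpa m).mpr ⟨heF, hbm⟩)
        exact hdep m hbm
  exact hF.subset_of_isBasis_of_isBasis hBF hBX (Set.mem_insert _ _)


lemma le_mRank {α : Type*} [Finite α] {M : Matroid α} {S J : Set α}
    (hJS : J ⊆ S) (hJ : M.Indep J) : J.ncard ≤ mRank M S := by
  refine le_csSup ⟨S.ncard, ?_⟩ ⟨J, ⟨hJS, hJ⟩, rfl⟩
  rintro x ⟨I, ⟨h1, _⟩, rfl⟩
  exact Set.ncard_le_ncard h1 (Set.toFinite _)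

lemma mRank_mono {α : Type*} [Finite α] {M : Matroid α} {S T : Set α} (h : S ⊆ T) :
    mRank M S ≤ mRank M T := by
  apply mRank_le_of
  intro I hIS hI
  exact le_mRank (hIS.trans h) hI


end Aux

section Aux2
variable {n k : ℕ}

lemma cflat_iff {M : Matroid (TnEdge n)} (hE : M.E = Set.univ)
    (hInd : ∀ S, M.Indep S ↔ TnIndep n S) {G : Set (TnEdge n)} :
    cFlat M (FkII n k) G ↔
      (spine ∉ G ∧ ∀ i : Fin n, (a i ∈ G ∨ b i ∈ G) → (k ≤ (i : ℕ) ∧ a i ∈ G ∧ b i ∈ G)) := by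
  constructor
  · rintro ⟨hdisj, hflat⟩
    have hd := Set.disjoint_left.mp hdisj
    refine ⟨fun h => hd h spine_mem_FkII, ?_⟩
    intro i hi
    have hki : k ≤ (i : ℕ) := by
      by_contra hlt
      rw [Nat.not_le] at hlt
      rcases hi with h | h
      · exact hd h (a_mem_FkII.mpr hlt)
      · exact hd h (b_mem_FkII.mpr hlt)
    have hsp : spine ∈ G ∪ FkII n k := Or.inr spine_mem_FkII
    rcases hi with h | h
    · have hb : b i ∈ G ∪ FkII n k := flat_a_to_b hE hInd hflat hsp (Or.inl h)
      have : b i ∉ FkII n k := fun hc => absurd (b_mem_FkII.mp hc) (Nat.not_lt.mpr hki)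
      exact ⟨hki, h, hb.resolve_right this⟩
    · have ha : a i ∈ G ∪ FkII n k := flat_b_to_a hE hInd hflat hsp (Or.inl h)
      have : a i ∉ FkII n k := fun hc => absurd (a_mem_FkII.mp hc) (Nat.not_lt.mpr hki)
      exact ⟨hki, ha.resolve_right this, h⟩
  · rintro ⟨hsp, hcl⟩
    constructor
    · rw [Set.disjoint_left]
      intro e heG heC
      cases e with
      | spine => exact hsp heG
      | a i => exact absurd (a_mem_FkII.mp heC) (Nat.not_lt.mpr ((hcl i (Or.inl heG)).1))
      | b i => exact absurd (b_mem_FkII.mp heC) (Nat.not_lt.mpr ((hcl i (Or.inr heG)).1))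
    · apply flat_of_closed hE hInd (Or.inr spine_mem_FkII)
      intro i
      by_cases hik : (i : ℕ) < k
      · constructor
        · intro _; exact Or.inr (b_mem_FkII.mpr hik)
        · intro _; exact Or.inr (a_mem_FkII.mpr hik)
      · constructor
        · rintro (h | h)
          · exact Or.inl (hcl i (Or.inl h)).2.2
          · exact absurd (a_mem_FkII.mp h) hik
        · rintro (h | h)
          · exact Or.inl (hcl i (Or.inr h)).2.1
          · exact absurd (b_mem_FkII.mp h) hik

end Aux2

theorem thagomizer_contract_typeII (n k : ℕ) (hk : k ≤ n)
    (M : Matroid (TnEdge n)) (hE : M.E = Set.univ)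
    (hInd : ∀ S, M.Indep S ↔ TnIndep n S) :
    -- the ground set of `T_n / F_k^{II}` consists of the spikes with index `≥ k`
    (M.E \ FkII n k = {e | ∃ i : Fin n, k ≤ (i : ℕ) ∧ (e = a i ∨ e = b i)}) ∧
    -- each remaining spike `{a i, b i}` is a parallel pair of rank one
    (∀ i : Fin n, k ≤ (i : ℕ) →
      cRank M (FkII n k) {a i} = 1 ∧ cRank M (FkII n k) {b i} = 1 ∧
      cRank M (FkII n k) {a i, b i} = 1) ∧
    -- `T_n / F_k^{II}` is the direct sum of these `n − k` rank-one matroids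
    (∀ I : Set (TnEdge n), I ⊆ M.E \ FkII n k →
      (cIndep M (FkII n k) I ↔
        ∀ i : Fin n, ¬ ({a i, b i} : Set (TnEdge n)) ⊆ I)) ∧
    -- hence its lattice of flats is a Boolean lattice of rank `n − k`
    Nonempty ({G : Set (TnEdge n) // cFlat M (FkII n k) G} ≃o Set (Fin (n - k))) := by
  classical
  have hground : M.E \ FkII n k = {e | ∃ i : Fin n, k ≤ (i : ℕ) ∧ (e = a i ∨ e = b i)} := by
    rw [hE]
    ext e
    simp only [Set.mem_diff, Set.mem_univ, true_and, Set.mem_setOf_eq]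
    cases e with
    | spine =>
        constructor
        · intro h; exact absurd spine_mem_FkII h
        · rintro ⟨i, _, h | h⟩ <;> cases h
    | a i =>
        constructor
        · intro h
          exact ⟨i, Nat.le_of_not_lt (fun hl => h (a_mem_FkII.mpr hl)), Or.inl rfl⟩
        · rintro ⟨j, hj, h | h⟩
          · injection h with h
            subst h
            exact fun hm => absurd (a_mem_FkII.mp hm) (Nat.not_lt.mpr hj)
          · cases h
    | b i =>
        constructor
        · intro h
          exact ⟨i, Nat.le_of_not_lt (fun hl => h (b_mem_FkII.mpr hl)), Or.inr rfl⟩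
        · rintro ⟨j, hj, h | h⟩
          · cases h
          · injection h with h
            subst h
            exact fun hm => absurd (b_mem_FkII.mp hm) (Nat.not_lt.mpr hj)
  have hC : mRank M (FkII n k) = k + 1 := by
    have := rank_union_eq (M := M) hk hInd (I := (∅ : Set (TnEdge n)))
      (Set.empty_subset _) (by simp)
    rwa [Set.empty_union, Set.ncard_empty, Nat.zero_add] at this
  have hsingle : ∀ i : Fin n, k ≤ (i : ℕ) → ∀ e : TnEdge n,
      ({e} : Set (TnEdge n)) ⊆ highSet n k → (∀ m : Fin n, ¬ (a m ∈ ({e} : Set (TnEdge n)) ∧ b m ∈ ({e} : Set (TnEdge n)))) →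
      mRank M ({e} ∪ FkII n k) = k + 2 := by
    intro i hki e hsub hnp
    rw [rank_union_eq hk hInd hsub hnp, Set.ncard_singleton]
    omega
  refine ⟨hground, ?_, ?_, ?_⟩
  · intro i hki
    have hai : mRank M ({a i} ∪ FkII n k) = k + 2 := by
      apply hsingle i hki
      · rw [Set.singleton_subset_iff]
        exact ⟨i, hki, Or.inl rfl⟩
      · rintro m ⟨-, h2⟩
        rw [Set.mem_singleton_iff] at h2
        cases h2
    have hbi : mRank M ({b i} ∪ FkII n k) = k + 2 := by
      apply hsingle i hki
      · rw [Set.singleton_subset_iff]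
        exact ⟨i, hki, Or.inr rfl⟩
      · rintro m ⟨h1, -⟩
        rw [Set.mem_singleton_iff] at h1
        cases h1
    have hpair : mRank M ({a i, b i} ∪ FkII n k) = k + 2 := by
      apply le_antisymm
      · have h1 := rank_union_le_pair (M := M) hk hInd
          (Set.mem_insert (a i) {b i}) (Set.mem_insert_of_mem _ rfl)
        have h2 : ({a i, b i} : Set (TnEdge n)).ncard = 2 :=
          Set.ncard_pair (fun h => by cases h)
        omega
      · rw [← hai]
        exact mRank_mono (Set.union_subset_union_left _ (by
          rw [Set.singleton_subset_iff]; exact Set.mem_insert _ _))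
    refine ⟨?_, ?_, ?_⟩ <;> simp only [cRank, hai, hbi, hpair, hC] <;> omega
  · intro I hIsub
    rw [hground] at hIsub
    have hIsub' : I ⊆ highSet n k := hIsub
    have hpair_iff : ∀ i : Fin n, ({a i, b i} : Set (TnEdge n)) ⊆ I ↔ (a i ∈ I ∧ b i ∈ I) := by
      intro i
      rw [Set.insert_subset_iff, Set.singleton_subset_iff]
    constructor
    · rintro ⟨-, heq⟩ i hsub
      rw [hpair_iff] at hsub
      have hle := rank_union_le_pair (M := M) hk hInd hsub.1 hsub.2
      rw [heq, hC] at hle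
      omega
    · intro hnp
      refine ⟨by rw [hground]; exact hIsub, ?_⟩
      rw [hC, rank_union_eq hk hInd hIsub' (fun i h => hnp i ((hpair_iff i).mpr h))]
  · -- the order isomorphism
    set emb : Fin (n - k) → Fin n := fun j => ⟨k + (j : ℕ), by omega⟩ with hemb
    have hembk : ∀ j : Fin (n - k), k ≤ ((emb j : Fin n) : ℕ) := fun j => Nat.le_add_right _ _
    have hembinj : Function.Injective emb := by
      intro x y h
      rw [hemb] at h
      have := Fin.val_eq_of_eq h
      simp only at this
      exact Fin.ext (by omega)
    have hflatG : ∀ s : Set (Fin (n - k)),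
        cFlat M (FkII n k) {e | ∃ j ∈ s, e = a (emb j) ∨ e = b (emb j)} := by
      intro s
      rw [cflat_iff hE hInd]
      constructor
      · rintro ⟨j, -, h | h⟩ <;> cases h
      · rintro i (⟨j, hj, h | h⟩ | ⟨j, hj, h | h⟩)
        · injection h with h
          subst h
          exact ⟨hembk j, ⟨j, hj, Or.inl rfl⟩, ⟨j, hj, Or.inr rfl⟩⟩
        · cases h
        · cases h
        · injection h with h
          subst h
          exact ⟨hembk j, ⟨j, hj, Or.inl rfl⟩, ⟨j, hj, Or.inr rfl⟩⟩
    refine ⟨⟨⟨fun G => {j : Fin (n - k) | a (emb j) ∈ G.1},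
      fun s => ⟨{e | ∃ j ∈ s, e = a (emb j) ∨ e = b (emb j)}, hflatG s⟩, ?_, ?_⟩, ?_⟩⟩
    · rintro ⟨G, hG⟩
      rw [cflat_iff hE hInd] at hG
      obtain ⟨hGs, hGc⟩ := hG
      apply Subtype.ext
      dsimp only
      ext e
      simp only [Set.mem_setOf_eq]
      cases e with
      | spine =>
          constructor
          · rintro ⟨j, -, h | h⟩ <;> cases h
          · intro h; exact absurd h hGs
      | a m =>
          constructor
          · rintro ⟨j, hj, h | h⟩
            · injection h with h; exact h ▸ hj
            · cases h
          · intro h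
            have hkm : k ≤ (m : ℕ) := (hGc m (Or.inl h)).1
            refine ⟨⟨(m : ℕ) - k, by omega⟩, ?_, Or.inl ?_⟩
            · have : emb ⟨(m : ℕ) - k, by omega⟩ = m := Fin.ext (by simp [hemb]; omega)
              rw [this]; exact h
            · congr 1; exact (Fin.ext (by simp [hemb]; omega)).symm
      | b m =>
          constructor
          · rintro ⟨j, hj, h | h⟩
            · cases h
            · injection h with h
              subst h
              exact (hGc _ (Or.inl hj)).2.2
          · intro h
            have hkm : k ≤ (m : ℕ) := (hGc m (Or.inr h)).1
            have ham : a m ∈ G := (hGc m (Or.inr h)).2.1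
            refine ⟨⟨(m : ℕ) - k, by omega⟩, ?_, Or.inr ?_⟩
            · have : emb ⟨(m : ℕ) - k, by omega⟩ = m := Fin.ext (by simp [hemb]; omega)
              rw [this]; exact ham
            · congr 1; exact (Fin.ext (by simp [hemb]; omega)).symm
    · intro s
      ext j
      simp only [Set.mem_setOf_eq]
      constructor
      · rintro ⟨j', hj', h | h⟩
        · injection h with h; exact (hembinj h) ▸ hj'
        · cases h
      · intro hj
        exact ⟨j, hj, Or.inl rfl⟩
    · rintro ⟨G, hG⟩ ⟨G', hG'⟩
      rw [cflat_iff hE hInd] at hG hG'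
      simp only [Equiv.coe_fn_mk, Set.le_eq_subset, Subtype.mk_le_mk]
      constructor
      · intro h e he
        cases e with
        | spine => exact absurd he hG.1
        | a m =>
            have hkm : k ≤ (m : ℕ) := (hG.2 m (Or.inl he)).1
            have hm : emb ⟨(m : ℕ) - k, by omega⟩ = m := Fin.ext (by simp [hemb]; omega)
            have : (⟨(m : ℕ) - k, by omega⟩ : Fin (n - k)) ∈ {j : Fin (n - k) | a (emb j) ∈ G} := by
              rw [Set.mem_setOf_eq, hm]; exact he
            have h2 := h this
            rw [Set.mem_setOf_eq, hm] at h2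
            exact h2
        | b m =>
            have hkm : k ≤ (m : ℕ) := (hG.2 m (Or.inr he)).1
            have ham : a m ∈ G := (hG.2 m (Or.inr he)).2.1
            have hm : emb ⟨(m : ℕ) - k, by omega⟩ = m := Fin.ext (by simp [hemb]; omega)
            have : (⟨(m : ℕ) - k, by omega⟩ : Fin (n - k)) ∈ {j : Fin (n - k) | a (emb j) ∈ G} := by
              rw [Set.mem_setOf_eq, hm]; exact ham
            have h2 := h this
            rw [Set.mem_setOf_eq, hm] at h2
            exact (hG'.2 m (Or.inl h2)).2.2
      · intro h j hj
        exact h hj
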